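/- For every integer n ≥ 1 and every ε ∈ (0,1) there exist δ > 0 and c > 0 (depending only on n and ε) with the following property: for every k ≤ n, if a₁, …, a_{k+1} are unit vectors in EuclideanSpace ℝ (Fin n) with ⟨a₁, a_i⟩ < −ε for all 2 ≤ i ≤ k+1 and ⟨a_i, a_j⟩ < δ for all 2 ≤ i ≠ j ≤ k+1, then there exists a unit vector ξ such that ⟨a₁, ξ⟩ < −c, ⟨a₂, ξ⟩ > c, and ⟨a_i, ξ⟩ = 0 for all 3 ≤ i ≤ k+1. -/

import Mathlib

open scoped InnerProductSpace
open Finset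

private lemma fin_one_le {k : ℕ} {i : Fin (k+1)} (h : i ≠ 0) : 1 ≤ (i : ℕ) := by
  rcases Nat.eq_zero_or_pos (i : ℕ) with h0 | h0
  · exact absurd (Fin.ext (by simpa using h0)) h
  · exact h0

private lemma aux_lower {n k : ℕ} {ε : ℝ}
    (a : Fin (k+1) → EuclideanSpace ℝ (Fin n)) (ha0 : ‖a 0‖ = 1)
    (h0 : ∀ i : Fin (k+1), 1 ≤ (i:ℕ) → ⟪a 0, a i⟫_ℝ < -ε)
    (p : Fin (k+1) → ℝ) (hp : ∀ i, 0 ≤ p i) (hp0 : p 0 = 0) :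
    ε * (∑ i, p i) ≤ ‖∑ i, p i • a i‖ := by
  have h1 : ε * (∑ i, p i) ≤ -⟪a 0, ∑ i, p i • a i⟫_ℝ := by
    rw [inner_sum, Finset.mul_sum, ← Finset.sum_neg_distrib]
    refine Finset.sum_le_sum fun i _ => ?_
    rw [real_inner_smul_right]
    rcases eq_or_lt_of_le (hp i) with h | h
    · simp [← h]
    · have hi : i ≠ 0 := fun hi => by simp [hi, hp0] at h
      have := h0 i (fin_one_le hi)
      nlinarith
  have h2 := abs_real_inner_le_norm (a 0) (∑ i, p i • a i)
  rw [ha0, one_mul] at h2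
  have := neg_abs_le (⟪a 0, ∑ i, p i • a i⟫_ℝ)
  linarith

private lemma aux_cross {n k : ℕ} {δ : ℝ} (hδ0 : 0 ≤ δ)
    (a : Fin (k+1) → EuclideanSpace ℝ (Fin n))
    (hpair : ∀ i j : Fin (k+1), 1 ≤ (i:ℕ) → 1 ≤ (j:ℕ) → i ≠ j → ⟪a i, a j⟫_ℝ < δ)
    (p m : Fin (k+1) → ℝ) (hp : ∀ i, 0 ≤ p i) (hm : ∀ i, 0 ≤ m i)
    (hp0 : p 0 = 0) (hm0 : m 0 = 0) (hdisj : ∀ i, p i = 0 ∨ m i = 0) :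
    ⟪∑ i, p i • a i, ∑ j, m j • a j⟫_ℝ ≤ δ * (∑ i, p i) * (∑ j, m j) := by
  rw [sum_inner]
  simp_rw [real_inner_smul_left]
  have key : ∀ i : Fin (k+1), p i * ⟪a i, ∑ j, m j • a j⟫_ℝ ≤ ∑ j, p i * m j * δ := by
    intro i
    rw [inner_sum, Finset.mul_sum]
    refine Finset.sum_le_sum fun j _ => ?_
    rw [real_inner_smul_right]
    rcases eq_or_lt_of_le (hp i) with h | h
    · simp [← h, mul_nonneg (hm j) hδ0]
    · rcases eq_or_lt_of_le (hm j) with h' | h'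
      · simp [← h', mul_assoc]
      · have hi : i ≠ 0 := fun hh => by simp [hh, hp0] at h
        have hj : j ≠ 0 := fun hh => by simp [hh, hm0] at h'
        have hij : i ≠ j := by
          rintro rfl
          rcases hdisj i with hh | hh
          · exact absurd hh h.ne'
          · exact absurd hh h'.ne'
        have := hpair i j (fin_one_le hi) (fin_one_le hj) hij
        nlinarith [mul_pos h h']
  calc (∑ i, p i * (⟪a i, ∑ j, m j • a j⟫_ℝ)) 
      ≤ ∑ i, ∑ j, p i * m j * δ := by
        refine Finset.sum_le_sum fun i _ => ?_
        exact key i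
    _ = δ * (∑ i, p i) * (∑ j, m j) := by
        rw [Finset.sum_comm]
        simp_rw [← Finset.sum_mul, ← Finset.mul_sum]
        ring

private lemma aux_arith {ε δ s t nP nM nv di : ℝ} (hε : 0 < ε) (hδ0 : 0 ≤ δ) (hδ : δ ≤ ε^2/2)
    (hs0 : 0 ≤ s) (ht0 : 0 ≤ t) (hnv : 0 ≤ nv)
    (hP1 : ε * s ≤ nP) (hM1 : ε * t ≤ nM)
    (hPsq : nP^2 ≤ s * nv + δ * s * t) (hMsq : nM^2 ≤ t * nv + δ * s * t)
    (hdle : di ≤ max s t) (hdi0 : 0 ≤ di) : di * ε^2 ≤ 2 * nv := by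
  have hh : (0:ℝ) ≤ ε^2/2 := by positivity
  rcases le_total t s with hts | hts
  · rw [max_eq_left hts] at hdle
    rcases eq_or_lt_of_le hs0 with h | h
    · have : di = 0 := le_antisymm (by linarith) hdi0
      rw [this, zero_mul]; positivity
    · have c0 : (ε*s)*(ε*s) ≤ nP * nP :=
        mul_self_le_mul_self (mul_nonneg hε.le hs0) hP1
      have c1 : ε^2 * s^2 ≤ s * nv + δ * s * t := by nlinarith [c0]
      have c2' : δ * t ≤ (ε^2/2) * s := mul_le_mul hδ hts ht0 hh
      have c2 : s * (δ * t) ≤ s * ((ε^2/2) * s) := mul_le_mul_of_nonneg_left c2' hs0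
      have key : ε^2 * s ≤ 2 * nv := by nlinarith [c1, c2]
      nlinarith [key]
  · rw [max_eq_right hts] at hdle
    rcases eq_or_lt_of_le ht0 with h | h
    · have : di = 0 := le_antisymm (by linarith) hdi0
      rw [this, zero_mul]; positivity
    · have c0 : (ε*t)*(ε*t) ≤ nM * nM :=
        mul_self_le_mul_self (mul_nonneg hε.le ht0) hM1
      have c1 : ε^2 * t^2 ≤ t * nv + δ * s * t := by nlinarith [c0]
      have c2' : δ * s ≤ (ε^2/2) * t := mul_le_mul hδ hts hs0 hh
      have c2 : t * (δ * s) ≤ t * ((ε^2/2) * t) := mul_le_mul_of_nonneg_left c2' ht0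
      have key : ε^2 * t ≤ 2 * nv := by nlinarith [c1, c2]
      nlinarith [key]

private lemma aux_coeff {n k : ℕ} {ε δ : ℝ} (hε : 0 < ε) (hδ0 : 0 ≤ δ) (hδ : δ ≤ ε^2/2)
    (a : Fin (k+1) → EuclideanSpace ℝ (Fin n)) (hnorm : ∀ i, ‖a i‖ = 1)
    (h0 : ∀ i : Fin (k+1), 1 ≤ (i:ℕ) → ⟪a 0, a i⟫_ℝ < -ε)
    (hpair : ∀ i j : Fin (k+1), 1 ≤ (i:ℕ) → 1 ≤ (j:ℕ) → i ≠ j → ⟪a i, a j⟫_ℝ < δ)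
    (d : Fin (k+1) → ℝ) (hd0 : d 0 = 0) (i0 : Fin (k+1)) :
    |d i0| * ε^2 ≤ 2 * ‖∑ j, d j • a j‖ := by
  set p : Fin (k+1) → ℝ := fun i => max (d i) 0 with hpdef
  set m : Fin (k+1) → ℝ := fun i => max (-(d i)) 0 with hmdef
  have hp : ∀ i, 0 ≤ p i := fun i => le_max_right _ _
  have hm : ∀ i, 0 ≤ m i := fun i => le_max_right _ _
  have hp0 : p 0 = 0 := by simp [hpdef, hd0]
  have hm0 : m 0 = 0 := by simp [hmdef, hd0]
  have hdisj : ∀ i, p i = 0 ∨ m i = 0 := by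
    intro i
    rcases le_total (d i) 0 with h | h
    · exact Or.inl (max_eq_right h)
    · exact Or.inr (max_eq_right (by linarith))
  have hsub : ∀ i, p i - m i = d i := by
    intro i
    rcases le_total (d i) 0 with h | h
    · simp [hpdef, hmdef, max_eq_right h, max_eq_left (by linarith : (0:ℝ) ≤ -(d i))]
    · simp [hpdef, hmdef, max_eq_left h, max_eq_right (by linarith : -(d i) ≤ 0)]
  set P : EuclideanSpace ℝ (Fin n) := ∑ i, p i • a i with hP
  set M : EuclideanSpace ℝ (Fin n) := ∑ i, m i • a i with hM
  set v : EuclideanSpace ℝ (Fin n) := ∑ j, d j • a j with hv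
  set s : ℝ := ∑ i, p i with hs
  set t : ℝ := ∑ i, m i with ht
  have hvPM : v = P - M := by
    rw [hP, hM, ← Finset.sum_sub_distrib]
    exact Finset.sum_congr rfl fun i _ => by rw [← sub_smul, hsub]
  have hs0 : 0 ≤ s := Finset.sum_nonneg fun i _ => hp i
  have ht0 : 0 ≤ t := Finset.sum_nonneg fun i _ => hm i
  have hP1 : ε * s ≤ ‖P‖ := aux_lower a (hnorm 0) h0 p hp hp0
  have hM1 : ε * t ≤ ‖M‖ := aux_lower a (hnorm 0) h0 m hm hm0
  have hPM : ⟪P, M⟫_ℝ ≤ δ * s * t :=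
    aux_cross hδ0 a hpair p m hp hm hp0 hm0 hdisj
  have hPn : ‖P‖ ≤ s := by
    calc ‖P‖ ≤ ∑ i, ‖p i • a i‖ := norm_sum_le _ _
      _ = s := by simp [norm_smul, hnorm, abs_of_nonneg (hp _), hs]
  have hMn : ‖M‖ ≤ t := by
    calc ‖M‖ ≤ ∑ i, ‖m i • a i‖ := norm_sum_le _ _
      _ = t := by simp [norm_smul, hnorm, abs_of_nonneg (hm _), ht]
  have hPsq : ‖P‖^2 ≤ s * ‖v‖ + δ * s * t := by
    have h1 : ⟪P, P⟫_ℝ = ⟪P, v⟫_ℝ + ⟪P, M⟫_ℝ := by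
      rw [hvPM, inner_sub_right]; ring
    have h2 : ⟪P, v⟫_ℝ ≤ ‖P‖ * ‖v‖ := real_inner_le_norm _ _
    have h3 := real_inner_self_eq_norm_sq P
    nlinarith [norm_nonneg v]
  have hMsq : ‖M‖^2 ≤ t * ‖v‖ + δ * s * t := by
    have h1 : ⟪M, M⟫_ℝ = ⟪M, P⟫_ℝ - ⟪M, v⟫_ℝ := by
      rw [hvPM, inner_sub_right]; ring
    have h2 : -⟪M, v⟫_ℝ ≤ ‖M‖ * ‖v‖ := by
      have := abs_real_inner_le_norm M v
      have := neg_abs_le (⟪M, v⟫_ℝ)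
      linarith
    have h3 := real_inner_self_eq_norm_sq M
    have h4 : ⟪M, P⟫_ℝ = ⟪P, M⟫_ℝ := real_inner_comm _ _
    nlinarith [norm_nonneg v]
  have hdle : |d i0| ≤ max s t := by
    have h1 : p i0 ≤ s := Finset.single_le_sum (fun i _ => hp i) (mem_univ i0)
    have h2 : m i0 ≤ t := Finset.single_le_sum (fun i _ => hm i) (mem_univ i0)
    rcases le_total (d i0) 0 with h | h
    · rw [abs_of_nonpos h]
      refine le_trans ?_ (le_max_right s t)
      exact le_trans (le_max_left _ _) h2
    · rw [abs_of_nonneg h]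
      refine le_trans ?_ (le_max_left s t)
      exact le_trans (le_max_left _ _) h1
  exact aux_arith hε hδ0 hδ hs0 ht0 (norm_nonneg v) hP1 hM1 hPsq hMsq hdle (abs_nonneg _)

private lemma aux_arith2 {ε δ s t nP nn : ℝ} (hε0 : 0 < ε) (hε1 : ε < 1) (hnn : 1 ≤ nn)
    (hs0 : 0 ≤ s) (ht0 : 0 ≤ t) (hP1 : ε * s ≤ nP)
    (hPsq : nP^2 ≤ δ*s + δ*s*t) (ht : t ≤ 4*nn/ε^2) (hδ : δ = ε^5/(10*nn)) :
    s ≤ ε/2 := by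
  have hnn0 : (0:ℝ) < nn := by linarith
  have hδ0 : 0 ≤ δ := by rw [hδ]; positivity
  have h1 : δ * t ≤ δ * (4*nn/ε^2) := mul_le_mul_of_nonneg_left ht hδ0
  have h2 : δ * (4*nn/ε^2) = 2*ε^3/5 := by
    rw [hδ]; field_simp; ring
  have h3 : δ ≤ ε^3/10 := by
    rw [hδ, div_le_div_iff₀ (by positivity) (by norm_num)]
    have h35 : ε^5 ≤ ε^3 := pow_le_pow_of_le_one hε0.le hε1.le (by norm_num)
    nlinarith [mul_nonneg (pow_nonneg hε0.le 3) (sub_nonneg.2 hnn)]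
  have h4 : δ + δ * t ≤ ε^3/2 := by nlinarith
  rcases eq_or_lt_of_le hs0 with h | h
  · linarith
  · have c0 : (ε*s)*(ε*s) ≤ nP * nP := mul_self_le_mul_self (by positivity) hP1
    have c1 : ε^2 * s^2 ≤ s * (δ + δ*t) := by nlinarith
    have c2 : s * (δ + δ*t) ≤ s * (ε^3/2) := mul_le_mul_of_nonneg_left h4 hs0
    have c3 : ε^2 * s^2 ≤ s * (ε^3/2) := le_trans c1 c2
    nlinarith [mul_pos (mul_pos hε0 hε0) h]

set_option maxHeartbeats 2000000 in
theorem stmt_10 (n : ℕ) (hn : 1 ≤ n) (ε : ℝ) (hε : ε ∈ Set.Ioo (0 : ℝ) 1) :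
    ∃ δ > (0 : ℝ), ∃ c > (0 : ℝ), ∀ k : ℕ, 1 ≤ k → k ≤ n →
      ∀ a : Fin (k + 1) → EuclideanSpace ℝ (Fin n),
        (∀ i, ‖a i‖ = 1) →
        (∀ i : Fin (k + 1), 1 ≤ (i : ℕ) → ⟪a 0, a i⟫_ℝ < -ε) →
        (∀ i j : Fin (k + 1), 1 ≤ (i : ℕ) → 1 ≤ (j : ℕ) → i ≠ j → ⟪a i, a j⟫_ℝ < δ) →
        ∃ ξ : EuclideanSpace ℝ (Fin n), ‖ξ‖ = 1 ∧
          ⟪a 0, ξ⟫_ℝ < -c ∧ c < ⟪a 1, ξ⟫_ℝ ∧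
          ∀ i : Fin (k + 1), 2 ≤ (i : ℕ) → ⟪a i, ξ⟫_ℝ = 0 := by
  classical
  obtain ⟨hε0, hε1⟩ := hε
  have hn' : (1:ℝ) ≤ (n:ℝ) := by exact_mod_cast hn
  set δ : ℝ := ε^5/(10*n) with hδdef
  have hδ0 : 0 ≤ δ := by rw [hδdef]; positivity
  have hδpos : 0 < δ := by
    rw [hδdef]; exact div_pos (by positivity) (by nlinarith)
  have hδhalf : δ ≤ ε^2/2 := by
    rw [hδdef, div_le_div_iff₀ (by nlinarith) (by norm_num)]
    have h52 : ε^5 ≤ ε^2 := pow_le_pow_of_le_one hε0.le hε1.le (by norm_num)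
    nlinarith [mul_nonneg (sq_nonneg ε) (sub_nonneg.2 hn')]
  refine ⟨δ, hδpos, ε^2/5, by positivity, ?_⟩
  intro k hk1 hkn a hnorm h0 hpair
  have hval1 : ((1 : Fin (k+1)) : ℕ) = 1 := by
    have hlt : 1 < k + 1 := by omega
    simp [Fin.val_one', Nat.mod_eq_of_lt hlt]
  -- the subspace spanned by a i, i ≥ 2
  set b' : Fin (k+1) → EuclideanSpace ℝ (Fin n) :=
    fun i => if 2 ≤ (i:ℕ) then a i else 0 with hb'def
  set W := Submodule.span ℝ (Set.range b') with hWdef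
  set w : EuclideanSpace ℝ (Fin n) :=
    (W.orthogonalProjectionOnto (a 1) : EuclideanSpace ℝ (Fin n)) with hwdef
  have hwW' : w ∈ W := (W.orthogonalProjectionOnto (a 1)).2
  have hbW' : a 1 - w ∈ Wᗮ := Submodule.sub_starProjection_mem_orthogonal (K := W) (a 1)
  clear_value w
  clear hwdef
  set b : EuclideanSpace ℝ (Fin n) := a 1 - w with hbdef
  clear_value b
  have hbW : b ∈ Wᗮ := hbW'
  have horthb : ∀ u ∈ W, ⟪b, u⟫_ℝ = 0 := fun u hu => by
    rw [real_inner_comm]; exact (Submodule.mem_orthogonal W b).1 hbW u hu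
  have haW : ∀ j : Fin (k+1), 2 ≤ (j:ℕ) → a j ∈ W := by
    intro j hj
    have h1 : b' j ∈ W := Submodule.subset_span ⟨j, rfl⟩
    simpa [hb'def, if_pos hj] using h1
  have hwW : w ∈ W := hwW'
  obtain ⟨c0, hc0⟩ := (Submodule.mem_span_range_iff_exists_fun ℝ).1 hwW
  set cc : Fin (k+1) → ℝ := fun i => if 2 ≤ (i:ℕ) then c0 i else 0 with hccdef
  have hcw : ∑ i, cc i • a i = w := by
    rw [← hc0]
    refine Finset.sum_congr rfl fun i _ => ?_
    by_cases h : 2 ≤ (i:ℕ) <;> simp [hb'def, hccdef, h]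
  have hcc0 : cc 0 = 0 := by simp [hccdef]
  have hcc1 : cc 1 = 0 := by
    show (if 2 ≤ ((1 : Fin (k+1)) : ℕ) then c0 1 else 0) = 0
    rw [hval1]; norm_num
  have hccsupp : ∀ i, cc i ≠ 0 → 2 ≤ (i:ℕ) := fun i hi => by
    by_contra h; exact hi (by simp [hccdef, h])
  have hbO : ∀ j : Fin (k+1), 2 ≤ (j:ℕ) → ⟪a j, b⟫_ℝ = 0 := fun j hj => by
    rw [real_inner_comm]; exact horthb (a j) (haW j hj)
  have hwb : ⟪w, b⟫_ℝ = 0 := by rw [real_inner_comm]; exact horthb w hwW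
  have hsplit : ‖w‖^2 + ‖b‖^2 = 1 := by
    have h1 : w + b = a 1 := by rw [hbdef]; abel
    have h2 := norm_add_sq_real w b
    rw [h1, hnorm 1, hwb] at h2
    nlinarith
  have hblow : ε^2 ≤ 2 * ‖b‖ := by
    set d : Fin (k+1) → ℝ := fun j => (if j = 1 then 1 else 0) - cc j with hddef
    have h01 : (0 : Fin (k+1)) ≠ 1 := by
      intro h; apply_fun (Fin.val) at h; rw [hval1] at h; simp at h
    have hd0 : d 0 = 0 := by simp [hddef, hcc0, h01]
    have hsum : ∑ j, d j • a j = b := by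
      have e1 : (∑ j, d j • a j)
          = (∑ j, (if j = 1 then (1:ℝ) else 0) • a j) - ∑ j, cc j • a j := by
        rw [← Finset.sum_sub_distrib]
        exact Finset.sum_congr rfl fun j _ => by rw [← sub_smul]
      rw [hbdef, ← hcw, e1]
      congr 1
      simp [ite_smul]
    have hd1 : d 1 = 1 := by simp [hddef, hcc1]
    have := aux_coeff hε0 hδ0 hδhalf a hnorm h0 hpair d hd0 1
    rw [hsum, hd1] at this
    simpa using this
  have hbpos : 0 < ‖b‖ := by nlinarith
  have hb1 : ‖b‖ ≤ 1 := by nlinarith [norm_nonneg b, norm_nonneg w]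
  have hw1 : ‖w‖ ≤ 1 := by nlinarith [norm_nonneg b, norm_nonneg w]
  have hccbd : ∀ i, |cc i| ≤ 2 / ε^2 := by
    intro i
    have h := aux_coeff hε0 hδ0 hδhalf a hnorm h0 hpair cc hcc0 i
    rw [hcw] at h
    rw [le_div_iff₀ (by positivity)]
    calc |cc i| * ε^2 ≤ 2 * ‖w‖ := h
      _ ≤ 2 := by linarith
  set p : Fin (k+1) → ℝ := fun i => max (cc i) 0 with hpdef
  set m : Fin (k+1) → ℝ := fun i => max (-(cc i)) 0 with hmdef
  have hp : ∀ i, 0 ≤ p i := fun i => le_max_right _ _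
  have hm : ∀ i, 0 ≤ m i := fun i => le_max_right _ _
  have hp0 : p 0 = 0 := by simp [hpdef, hcc0]
  have hm0 : m 0 = 0 := by simp [hmdef, hcc0]
  have hdisj : ∀ i, p i = 0 ∨ m i = 0 := by
    intro i
    rcases le_total (cc i) 0 with h | h
    · exact Or.inl (max_eq_right h)
    · exact Or.inr (max_eq_right (by linarith))
  have hsub : ∀ i, p i - m i = cc i := by
    intro i
    rcases le_total (cc i) 0 with h | h
    · simp [hpdef, hmdef, max_eq_right h, max_eq_left (by linarith : (0:ℝ) ≤ -(cc i))]
    · simp [hpdef, hmdef, max_eq_left h, max_eq_right (by linarith : -(cc i) ≤ 0)]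
  set s : ℝ := ∑ i, p i with hsdef
  set t : ℝ := ∑ i, m i with htdef
  have hs0 : 0 ≤ s := Finset.sum_nonneg fun i _ => hp i
  have ht0 : 0 ≤ t := Finset.sum_nonneg fun i _ => hm i
  have ht4 : t ≤ 4 * n / ε^2 := by
    have h1 : ∀ i : Fin (k+1), m i ≤ 2/ε^2 := fun i =>
      le_trans (max_le (neg_le_abs _) (abs_nonneg _)) (hccbd i)
    have h2 : t ≤ (k+1 : ℝ) * (2/ε^2) := by
      rw [htdef]
      calc ∑ i, m i ≤ ∑ _i : Fin (k+1), 2/ε^2 := Finset.sum_le_sum fun i _ => h1 i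
        _ = (k+1 : ℝ) * (2/ε^2) := by simp [Finset.sum_const]
    have h3 : (k+1 : ℝ) ≤ 2 * n := by
      have : (k:ℝ) ≤ n := by exact_mod_cast hkn
      nlinarith
    calc t ≤ (k+1 : ℝ) * (2/ε^2) := h2
      _ ≤ (2*n) * (2/ε^2) := by
          apply mul_le_mul_of_nonneg_right h3 (by positivity)
      _ = 4 * n / ε^2 := by ring
  -- bound s
  have hP1 : ε * s ≤ ‖∑ i, p i • a i‖ := aux_lower a (hnorm 0) h0 p hp hp0
  have hPM : ⟪∑ i, p i • a i, ∑ j, m j • a j⟫_ℝ ≤ δ * s * t :=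
    aux_cross hδ0 a hpair p m hp hm hp0 hm0 hdisj
  have hPMw : (∑ i, p i • a i) = w + ∑ j, m j • a j := by
    have h1 : (∑ i, p i • a i) - (∑ j, m j • a j) = w := by
      rw [← hcw, ← Finset.sum_sub_distrib]
      exact Finset.sum_congr rfl fun i _ => by rw [← sub_smul, hsub]
    rw [← h1]; abel
  have hPw : ⟪∑ i, p i • a i, w⟫_ℝ ≤ δ * s := by
    rw [sum_inner]
    simp_rw [real_inner_smul_left]
    have hterm : ∀ i : Fin (k+1), p i * ⟪a i, w⟫_ℝ ≤ p i * δ := by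
      intro i
      rcases eq_or_lt_of_le (hp i) with h | h
      · rw [← h]; simp
      · have hcci : cc i ≠ 0 := by
          intro hcc
          rw [hpdef] at h; simp [hcc] at h
        have hi2 : 2 ≤ (i:ℕ) := hccsupp i hcci
        have hiw : ⟪a i, w⟫_ℝ = ⟪a i, a 1⟫_ℝ := by
          have h9 : ⟪a i, a 1 - w⟫_ℝ = 0 := by rw [← hbdef]; exact hbO i hi2
          rw [inner_sub_right] at h9
          linarith
        have hne : i ≠ 1 := by
          intro hh; rw [hh, hval1] at hi2; omega
        have := hpair i 1 (by omega) (by rw [hval1]) hne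
        rw [hiw]
        nlinarith
    calc ∑ i, p i * ⟪a i, w⟫_ℝ ≤ ∑ i, p i * δ := Finset.sum_le_sum fun i _ => hterm i
      _ = δ * s := by rw [hsdef, ← Finset.sum_mul]; ring
  have hPsq : ‖∑ i, p i • a i‖^2 ≤ δ*s + δ*s*t := by
    have h1 : ⟪∑ i, p i • a i, ∑ i, p i • a i⟫_ℝ
        = ⟪∑ i, p i • a i, w⟫_ℝ + ⟪∑ i, p i • a i, ∑ j, m j • a j⟫_ℝ := by
      nth_rewrite 2 [hPMw]
      rw [inner_add_right]
    have h2 := real_inner_self_eq_norm_sq (∑ i, p i • a i)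
    rw [h2] at h1
    linarith
  have hs2 : s ≤ ε/2 :=
    aux_arith2 hε0 hε1 hn' hs0 ht0 hP1 hPsq ht4 hδdef
  -- the inner product of a 0 with b
  have hterm0 : ∀ i : Fin (k+1), -(cc i * ⟪a 0, a i⟫_ℝ) ≤ p i := by
    intro i
    rcases lt_trichotomy (cc i) 0 with h | h | h
    · have hi2 := hccsupp i h.ne
      have hx := h0 i (by omega)
      have hx0 : ⟪a 0, a i⟫_ℝ < 0 := by linarith
      have hpi : p i = 0 := max_eq_right h.le
      rw [hpi]
      nlinarith [mul_pos_of_neg_of_neg h hx0]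
    · simp [hpdef, h]
    · have habs := abs_real_inner_le_norm (a 0) (a i)
      rw [hnorm 0, hnorm i] at habs
      have hpi : p i = cc i := max_eq_left h.le
      rw [hpi]
      have := abs_le.1 habs
      nlinarith [this.1, this.2]
  have ha0b : ⟪a 0, b⟫_ℝ ≤ -(ε/2) := by
    have h1 : ⟪a 0, b⟫_ℝ = ⟪a 0, a 1⟫_ℝ - ∑ i, cc i * ⟪a 0, a i⟫_ℝ := by
      rw [hbdef, inner_sub_right, ← hcw, inner_sum]
      simp_rw [real_inner_smul_right]
    have h2 : -∑ i, cc i * ⟪a 0, a i⟫_ℝ ≤ s := by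
      rw [← Finset.sum_neg_distrib]
      exact le_trans (Finset.sum_le_sum fun i _ => hterm0 i) (le_of_eq hsdef.symm)
    have h3 := h0 1 (by rw [hval1])
    rw [h1]; linarith
  -- construct ξ
  refine ⟨‖b‖⁻¹ • b, ?_, ?_, ?_, ?_⟩
  · rw [norm_smul, norm_inv, norm_norm, inv_mul_cancel₀ hbpos.ne']
  · rw [real_inner_smul_right]
    have hinv1 : 1 ≤ ‖b‖⁻¹ := by
      rw [le_inv_comm₀] <;> first | exact hbpos | simpa using hb1 | norm_num
    have h5 : ‖b‖⁻¹ * ⟪a 0, b⟫_ℝ ≤ 1 * ⟪a 0, b⟫_ℝ :=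
      mul_le_mul_of_nonpos_right hinv1 (by linarith)
    rw [one_mul] at h5
    nlinarith
  · rw [real_inner_smul_right]
    have hA : ⟪a 1, b⟫_ℝ = ‖b‖^2 := by
      have h6 : a 1 = w + b := by rw [hbdef]; abel
      rw [h6, inner_add_left, real_inner_self_eq_norm_sq, hwb, zero_add]
    rw [hA]
    have h7 : ‖b‖⁻¹ * ‖b‖^2 = ‖b‖ := by
      field_simp
    rw [h7]
    nlinarith
  · intro i hi
    rw [real_inner_smul_right, hbO i hi, mul_zero]
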